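/- (Strong duality, Eq. (4).) For any ensemble {(q_i, ρ_i)}_{i=1}^N of qubit states, the guessing probability satisfies p_guess = inf { Re(tr K) : K a 2×2 complex Hermitian matrix with K − q_i ρ_i positive semidefinite for all i }, and this infimum is attained. -/

import Mathlib

open Matrix
open scoped ComplexOrder

noncomputable section

/-- The Pauli matrix σ_X. -/
def sigmaX : Matrix (Fin 2) (Fin 2) ℂ := !![0, 1; 1, 0]

/-- The Pauli matrix σ_Y. -/
def sigmaY : Matrix (Fin 2) (Fin 2) ℂ := !![0, -Complex.I; Complex.I, 0]

/-- The Pauli matrix σ_Z. -/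
def sigmaZ : Matrix (Fin 2) (Fin 2) ℂ := !![1, 0; 0, -1]

/-- `v · σ = v₁ σ_X + v₂ σ_Y + v₃ σ_Z` for a vector `v ∈ ℝ³`. -/
def pauliDot (v : EuclideanSpace ℝ (Fin 3)) : Matrix (Fin 2) (Fin 2) ℂ :=
  (v 0 : ℂ) • sigmaX + (v 1 : ℂ) • sigmaY + (v 2 : ℂ) • sigmaZ

/-- A qubit state: a 2×2 complex positive semidefinite matrix with trace 1. -/
def IsQubitState (ρ : Matrix (Fin 2) (Fin 2) ℂ) : Prop :=
  ρ.PosSemidef ∧ ρ.trace = 1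

/-- An `N`-outcome POVM: positive semidefinite matrices summing to the identity. -/
def IsPOVM {N : ℕ} (M : Fin N → Matrix (Fin 2) (Fin 2) ℂ) : Prop :=
  (∀ i, (M i).PosSemidef) ∧ ∑ i, M i = 1

/-- The guessing probability of the ensemble `{(q i, ρ i)}`:
the supremum over all `N`-outcome POVMs of `∑ i, q i · Re (tr (ρ i * M i))`. -/
def pGuess {N : ℕ} (q : Fin N → ℝ) (ρ : Fin N → Matrix (Fin 2) (Fin 2) ℂ) : ℝ :=
  sSup {x : ℝ | ∃ M : Fin N → Matrix (Fin 2) (Fin 2) ℂ,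
    IsPOVM M ∧ x = ∑ i, q i * ((ρ i * M i).trace).re}

/-- A POVM is optimal when it attains the guessing probability. -/
def IsOptimalPOVM {N : ℕ} (q : Fin N → ℝ) (ρ M : Fin N → Matrix (Fin 2) (Fin 2) ℂ) : Prop :=
  IsPOVM M ∧ ∑ i, q i * ((ρ i * M i).trace).re = pGuess q ρ

abbrev E3 := EuclideanSpace ℝ (Fin 3)

def blochMat (a : ℝ) (m : E3) : Matrix (Fin 2) (Fin 2) ℂ :=
  (a : ℂ) • 1 + pauliDot m

lemma blochMat_eq (a : ℝ) (m : E3) :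
    blochMat a m = !![(a : ℂ) + (m 2 : ℝ), (m 0 : ℝ) - (m 1 : ℝ) * Complex.I;
      (m 0 : ℝ) + (m 1 : ℝ) * Complex.I, (a : ℂ) - (m 2 : ℝ)] := by
  ext i j
  fin_cases i <;> fin_cases j <;>
    simp [blochMat, pauliDot, sigmaX, sigmaY, sigmaZ, Matrix.one_apply] <;> ring

lemma norm_sq_E3 (m : E3) : (‖m‖ : ℝ) ^ 2 = m 0 ^ 2 + m 1 ^ 2 + m 2 ^ 2 := by
  rw [EuclideanSpace.norm_eq]
  rw [Real.sq_sqrt (by positivity)]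
  simp [Fin.sum_univ_three, Real.norm_eq_abs, sq_abs]

lemma blochMat_isHermitian (a : ℝ) (m : E3) : (blochMat a m).IsHermitian := by
  rw [blochMat_eq]
  unfold Matrix.IsHermitian
  ext i j
  fin_cases i <;> fin_cases j <;>
    simp [Matrix.conjTranspose_apply, Complex.ext_iff]

lemma blochMat_trace (a : ℝ) (m : E3) : (blochMat a m).trace = (2 * a : ℝ) := by
  rw [blochMat_eq, Matrix.trace_fin_two]
  simp
  push_cast
  ring

lemma blochMat_trace_mul_re (a b : ℝ) (m n : E3) :
    ((blochMat a m) * (blochMat b n)).trace.re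
      = 2 * (a * b + (m 0 * n 0 + m 1 * n 1 + m 2 * n 2)) := by
  rw [blochMat_eq, blochMat_eq, Matrix.trace_fin_two]
  simp [Matrix.mul_apply, Fin.sum_univ_two, Complex.ext_iff]
  ring

lemma blochMat_add (a b : ℝ) (m n : E3) :
    blochMat a m + blochMat b n = blochMat (a + b) (m + n) := by
  rw [blochMat_eq, blochMat_eq, blochMat_eq]
  ext i j
  fin_cases i <;> fin_cases j <;>
    simp [Complex.ext_iff] <;> ring

lemma blochMat_sub (a b : ℝ) (m n : E3) :
    blochMat a m - blochMat b n = blochMat (a - b) (m - n) := by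
  rw [blochMat_eq, blochMat_eq, blochMat_eq]
  ext i j
  fin_cases i <;> fin_cases j <;>
    simp [Complex.ext_iff] <;> ring

lemma blochMat_real_smul (r a : ℝ) (m : E3) :
    r • blochMat a m = blochMat (r * a) (r • m) := by
  rw [blochMat_eq, blochMat_eq]
  ext i j
  fin_cases i <;> fin_cases j <;>
    simp [Complex.ext_iff, Complex.real_smul] <;> ring

lemma blochMat_one : blochMat 1 0 = 1 := by
  rw [blochMat_eq]
  ext i j
  fin_cases i <;> fin_cases j <;> simp [Matrix.one_apply]

lemma posSemidef_real_smul {A : Matrix (Fin 2) (Fin 2) ℂ} (hA : A.PosSemidef)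
    {r : ℝ} (hr : 0 ≤ r) : (r • A).PosSemidef := by
  have hsm : r • A = (r : ℂ) • A := by
    ext i j; simp [Complex.real_smul]
  rw [hsm]
  constructor
  · unfold Matrix.IsHermitian
    rw [Matrix.conjTranspose_smul, hA.1]
    congr 1
    simp
  · intro x
    exact (hA.smul (show (0:ℂ) ≤ (r:ℂ) by exact_mod_cast hr)).2 x

lemma blochMat_scalar_posSemidef {a : ℝ} (ha : 0 ≤ a) : (blochMat a 0).PosSemidef := by
  have h0 : pauliDot 0 = 0 := by
    ext i j
    fin_cases i <;> fin_cases j <;> simp [pauliDot, sigmaX, sigmaY, sigmaZ]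
  have : blochMat a 0 = a • (1 : Matrix (Fin 2) (Fin 2) ℂ) := by
    rw [blochMat]
    simp only [h0, add_zero]
    ext i j; simp [Complex.real_smul]
  rw [this]
  exact posSemidef_real_smul Matrix.PosSemidef.one ha

lemma blochMat_sq (s : ℝ) (m : E3) (hs : s = ‖m‖) :
    blochMat s m * blochMat s m = (2 * s) • blochMat s m := by
  have h2 := norm_sq_E3 m
  rw [← hs] at h2
  rw [blochMat_eq]
  ext i j
  fin_cases i <;> fin_cases j <;>
    (simp [Matrix.mul_apply, Fin.sum_univ_two, Matrix.smul_apply, Complex.ext_iff,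
      Complex.real_smul]) <;>
    constructor <;> linarith [h2]

lemma blochMat_posSemidef_of {a : ℝ} {m : E3} (h : ‖m‖ ≤ a) : (blochMat a m).PosSemidef := by
  set s := ‖m‖ with hs
  have hs0 : 0 ≤ s := norm_nonneg m
  rcases eq_or_lt_of_le hs0 with hz | hpos
  · have hm : m = 0 := norm_eq_zero.mp hz.symm
    rw [hm]
    exact blochMat_scalar_posSemidef (by linarith)
  · have hQ : (blochMat s m).PosSemidef := by
      have hsq := blochMat_sq s m hs
      have hherm := blochMat_isHermitian s m
      have hrep : blochMat s m = (2 * s)⁻¹ • ((blochMat s m)ᴴ * blochMat s m) := by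
        rw [hherm, hsq, smul_smul, inv_mul_cancel₀ (by positivity), one_smul]
      rw [hrep]
      exact posSemidef_real_smul (Matrix.posSemidef_conjTranspose_mul_self _) (by positivity)
    have hdecomp : blochMat a m = blochMat (a - s) 0 + blochMat s m := by
      rw [blochMat_add]
      norm_num
    rw [hdecomp]
    exact (blochMat_scalar_posSemidef (by linarith)).add hQ

lemma re_of_nonneg {z : ℂ} (h : 0 ≤ z) : 0 ≤ z.re := (Complex.le_def.mp h).1

lemma blochMat_posSemidef_to {a : ℝ} {m : E3} (h : (blochMat a m).PosSemidef) : ‖m‖ ≤ a := by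
  set s := ‖m‖ with hs
  have hs0 : 0 ≤ s := norm_nonneg m
  have hs2 : s ^ 2 = m 0 ^ 2 + m 1 ^ 2 + m 2 ^ 2 := by rw [hs]; exact norm_sq_E3 m
  have h1 : 0 ≤ a + m 2 := by
    have h0 := re_of_nonneg (h.dotProduct_mulVec_nonneg ![1, 0])
    have : (star ![(1 : ℂ), 0] ⬝ᵥ (blochMat a m *ᵥ ![1, 0])).re = a + m 2 := by
      rw [blochMat_eq]
      simp [dotProduct, Matrix.mulVec, Fin.sum_univ_two]
    linarith [this ▸ h0]
  have h2 : 0 ≤ a - m 2 := by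
    have h0 := re_of_nonneg (h.dotProduct_mulVec_nonneg ![0, 1])
    have : (star ![(0 : ℂ), 1] ⬝ᵥ (blochMat a m *ᵥ ![0, 1])).re = a - m 2 := by
      rw [blochMat_eq]
      simp [dotProduct, Matrix.mulVec, Fin.sum_univ_two]
    linarith [this ▸ h0]
  have h3 : 0 ≤ (a + m 2) * (m 0 ^ 2 + m 1 ^ 2)
      + 2 * (-(m 2 + s)) * (m 0 ^ 2 + m 1 ^ 2) + (a - m 2) * (-(m 2 + s)) ^ 2 := by
    set t : ℝ := -(m 2 + s) with ht
    have h0 := re_of_nonneg (h.dotProduct_mulVec_nonneg ![(m 0 : ℂ) - (m 1 : ℝ) * Complex.I, (t : ℂ)])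
    have hre : (star ![(m 0 : ℂ) - (m 1 : ℝ) * Complex.I, (t : ℂ)] ⬝ᵥ
        (blochMat a m *ᵥ ![(m 0 : ℂ) - (m 1 : ℝ) * Complex.I, (t : ℂ)])).re
        = (a + m 2) * (m 0 ^ 2 + m 1 ^ 2) + 2 * t * (m 0 ^ 2 + m 1 ^ 2) + (a - m 2) * t ^ 2 := by
      rw [blochMat_eq]
      simp [dotProduct, Matrix.mulVec, Fin.sum_univ_two, Complex.ext_iff]
      ring
    linarith [hre ▸ h0]
  -- E = 2 s (s + m 2) (a - s) ≥ 0
  have hE : 0 ≤ 2 * s * (s + m 2) * (a - s) := by nlinarith [h3, hs2]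
  by_contra hc
  push_neg at hc
  have hsc : 0 ≤ s + m 2 := by nlinarith [hs2, sq_nonneg (m 0), sq_nonneg (m 1)]
  have hspos : 0 < s := by linarith
  have : s + m 2 = 0 := by
    refine le_antisymm ?_ hsc
    by_contra hp
    push_neg at hp
    have hprod := mul_pos (mul_pos (by linarith : (0:ℝ) < 2 * s) hp)
      (by linarith : (0:ℝ) < s - a)
    nlinarith [hE]
  have hw : m 0 ^ 2 + m 1 ^ 2 = 0 := by nlinarith [hs2]
  linarith [h1, this]

lemma trace_re_nonneg_of_psd {A : Matrix (Fin 2) (Fin 2) ℂ} (h : A.PosSemidef) :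
    0 ≤ A.trace.re := by
  have h0 := re_of_nonneg (h.dotProduct_mulVec_nonneg ![1, 0])
  have h1 := re_of_nonneg (h.dotProduct_mulVec_nonneg ![0, 1])
  have e0 : (star ![(1 : ℂ), 0] ⬝ᵥ (A *ᵥ ![1, 0])) = A 0 0 := by
    simp [dotProduct, Matrix.mulVec, Fin.sum_univ_two]
  have e1 : (star ![(0 : ℂ), 1] ⬝ᵥ (A *ᵥ ![0, 1])) = A 1 1 := by
    simp [dotProduct, Matrix.mulVec, Fin.sum_univ_two]
  rw [e0] at h0
  rw [e1] at h1
  rw [Matrix.trace_fin_two, Complex.add_re]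
  linarith

lemma trace_mul_re_nonneg {A B : Matrix (Fin 2) (Fin 2) ℂ}
    (hA : A.PosSemidef) (hB : B.PosSemidef) : 0 ≤ ((A * B).trace).re := by
  obtain ⟨C, hC⟩ : ∃ C : Matrix (Fin 2) (Fin 2) ℂ, B = Cᴴ * C := by
    open scoped MatrixOrder in exact CStarAlgebra.nonneg_iff_eq_star_mul_self.mp hB.nonneg
  have : (A * B).trace = (C * A * Cᴴ).trace := by
    rw [hC, ← mul_assoc, Matrix.trace_mul_cycle]
  rw [this]
  exact trace_re_nonneg_of_psd (hA.mul_mul_conjTranspose_same C)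

lemma qubit_bloch {ρ : Matrix (Fin 2) (Fin 2) ℂ} (hpsd : ρ.PosSemidef) (htr : ρ.trace = 1) :
    ∃ c : E3, ‖c‖ ≤ 1 / 2 ∧ ρ = blochMat (1 / 2) c := by
  have hH := hpsd.1
  have h00 : (ρ 0 0).im = 0 := by
    have := congrFun (congrFun hH 0) 0
    rw [Matrix.conjTranspose_apply] at this
    have h2 := congrArg Complex.im this
    simp [Complex.ext_iff] at h2
    linarith
  have h11 : (ρ 1 1).im = 0 := by
    have := congrFun (congrFun hH 1) 1
    rw [Matrix.conjTranspose_apply] at this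
    have h2 := congrArg Complex.im this
    simp [Complex.ext_iff] at h2
    linarith
  have h10 : ρ 1 0 = starRingEnd ℂ (ρ 0 1) := by
    have := congrFun (congrFun hH 1) 0
    rw [Matrix.conjTranspose_apply] at this
    exact this.symm
  have htr2 : ρ 0 0 + ρ 1 1 = 1 := by rwa [Matrix.trace_fin_two] at htr
  have htr_re : (ρ 0 0).re + (ρ 1 1).re = 1 := by
    simpa [Complex.ext_iff] using congrArg Complex.re htr2
  set c : E3 := WithLp.toLp 2 ![(ρ 0 1).re, -(ρ 0 1).im, (ρ 0 0).re - 1 / 2] with hc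
  have heq : ρ = blochMat (1 / 2) c := by
    rw [blochMat_eq]
    ext i j
    fin_cases i <;> fin_cases j <;>
      (apply Complex.ext <;>
        simp [hc, h00, h11, h10, Complex.ext_iff] <;> linarith [htr_re])
  exact ⟨c, by
    have := blochMat_posSemidef_to (heq ▸ hpsd)
    linarith, heq⟩

open scoped RealInnerProductSpace in
lemma kkt {N : ℕ} (hN : 0 < N) (q : Fin N → ℝ) (hq : ∀ i, 0 < q i) (u : Fin N → E3) :
    ∃ (g : ℝ) (k : E3) (lam : Fin N → ℝ) (w : Fin N → E3),
      (∀ i, q i + 2 * ‖k - u i‖ ≤ g) ∧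
      (∀ i, 0 ≤ lam i) ∧ (∑ i, lam i = 1) ∧ (∑ i, lam i • w i = 0) ∧
      (∀ i, ‖w i‖ ≤ 1) ∧
      (∑ i, lam i * (q i + 2 * ⟪u i, w i⟫)) = g := by
  classical
  have hNe : Nonempty (Fin N) := ⟨⟨0, hN⟩⟩
  have Hne : (Finset.univ : Finset (Fin N)).Nonempty := Finset.univ_nonempty
  set f : Fin N → E3 → ℝ := fun i k => q i + 2 * ‖k - u i‖ with hf
  have hfc : ∀ i, Continuous (f i) := fun i =>
    continuous_const.add (continuous_const.mul (continuous_id.sub continuous_const).norm)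
  set G : E3 → ℝ := fun k => Finset.univ.sup' Hne (fun i => f i k) with hG
  have hGc : Continuous G := Continuous.finset_sup'_apply Hne (fun i _ => hfc i)
  have hfleG : ∀ i k, f i k ≤ G k := fun i k =>
    Finset.le_sup' (fun i => f i k) (Finset.mem_univ i)
  obtain ⟨i₁⟩ := hNe
  have hG0 : 0 ≤ G 0 := le_trans (by have := hq i₁; have := norm_nonneg (0 - u i₁); simp only [hf]; nlinarith) (hfleG i₁ 0)
  obtain ⟨k₀, hk₀mem, hk₀min⟩ := (isCompact_closedBall (0 : E3) (G 0)).exists_isMinOn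
      ⟨0, Metric.mem_closedBall_self hG0⟩ hGc.continuousOn
  have hu_le : ∀ i, 2 * ‖u i‖ ≤ G 0 := by
    intro i
    have h1 := hfleG i 0
    simp only [hf, zero_sub, norm_neg] at h1
    linarith [(hq i).le]
  have hglobal : ∀ k, G k₀ ≤ G k := by
    intro k
    by_cases hk : k ∈ Metric.closedBall (0 : E3) (G 0)
    · exact hk₀min hk
    · have hknorm : G 0 < ‖k‖ := by
        simp only [Metric.mem_closedBall, dist_zero_right, not_le] at hk
        exact hk
      have h1 : ‖k‖ - ‖u i₁‖ ≤ ‖k - u i₁‖ := norm_sub_norm_le _ _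
      have h2 : G k₀ ≤ G 0 := hk₀min (Metric.mem_closedBall_self hG0)
      have h3 := hfleG i₁ k
      have h4 := hu_le i₁
      have h5 := (hq i₁).le
      simp only [hf] at h3
      linarith
  set g := G k₀ with hg
  set A : Finset (Fin N) := Finset.univ.filter (fun i => f i k₀ = g) with hA
  obtain ⟨i₀, _, hi₀⟩ := Finset.exists_mem_eq_sup' Hne (fun i => f i k₀)
  have hAne : A.Nonempty := ⟨i₀, Finset.mem_filter.mpr ⟨Finset.mem_univ _, hi₀.symm⟩⟩
  have hfi_le : ∀ i, f i k₀ ≤ g := fun i => hfleG i k₀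
  by_cases hcase : ∃ i ∈ A, k₀ = u i
  · obtain ⟨i, hiA, hik⟩ := hcase
    have hfi : f i k₀ = g := (Finset.mem_filter.mp hiA).2
    refine ⟨g, k₀, fun j => if j = i then 1 else 0, fun _ => 0, hfi_le, ?_, ?_, ?_, ?_, ?_⟩
    · intro j; by_cases h : j = i <;> simp [h]
    · simp
    · simp
    · intro j; simp
    · have hz : ‖k₀ - u i‖ = 0 := by rw [hik, sub_self, norm_zero]
      simp only [hf] at hfi
      simp only [inner_zero_right, mul_zero, add_zero, ite_mul, one_mul, zero_mul,
        Finset.sum_ite_eq', Finset.mem_univ, if_true]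
      linarith
  · push_neg at hcase
    set n : Fin N → E3 := fun i => ‖k₀ - u i‖⁻¹ • (k₀ - u i) with hn
    have hne0 : ∀ i ∈ A, k₀ - u i ≠ 0 := fun i hi => sub_ne_zero.mpr (hcase i hi)
    have hnorm_pos : ∀ i ∈ A, 0 < ‖k₀ - u i‖ := fun i hi => norm_pos_iff.mpr (hne0 i hi)
    have hrep : ∀ i ∈ A, k₀ - u i = ‖k₀ - u i‖ • n i := fun i hi => by
      rw [hn, smul_smul, mul_inv_cancel₀ (hnorm_pos i hi).ne', one_smul]
    have hnorm_n : ∀ i ∈ A, ‖n i‖ = 1 := fun i hi => by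
      rw [hn, norm_smul, norm_inv, norm_norm, inv_mul_cancel₀ (hnorm_pos i hi).ne']
    set S : Set E3 := n '' ↑A with hS
    have hSfin : S.Finite := A.finite_toSet.image _
    have h0mem : (0 : E3) ∈ convexHull ℝ S := by
      by_contra h0
      obtain ⟨φ, u₀, hφ0, hφS⟩ := geometric_hahn_banach_point_closed
        (convex_convexHull ℝ S) (hSfin.isCompact_convexHull ℝ).isClosed h0
      rw [map_zero] at hφ0
      set d : E3 := (InnerProductSpace.toDual ℝ E3).symm φ with hd
      have hdx : ∀ x, ⟪d, x⟫ = φ x := fun x => InnerProductSpace.toDual_symm_apply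
      have hdn : ∀ i ∈ A, u₀ < ⟪d, n i⟫ := fun i hi => by
        rw [hdx]; exact hφS _ (subset_convexHull ℝ S ⟨i, hi, rfl⟩)
      have hdk : ∀ i ∈ A, 0 < ⟪d, k₀ - u i⟫ := by
        intro i hi
        rw [hrep i hi, real_inner_smul_right]
        exact mul_pos (hnorm_pos i hi) (lt_trans hφ0 (hdn i hi))
      set εf : Fin N → ℝ := fun i => if i ∈ A then ⟪d, k₀ - u i⟫ / (‖d‖ ^ 2 + 1)
        else (g - f i k₀) / (2 * ‖d‖ + 1) with hεf
      have hεfpos : ∀ i, 0 < εf i := by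
        intro i
        by_cases hi : i ∈ A
        · simp only [hεf, hi, if_true]
          exact div_pos (hdk i hi) (by positivity)
        · simp only [hεf, hi, if_false]
          refine div_pos ?_ (by positivity)
          have hne : f i k₀ ≠ g := fun h => hi (Finset.mem_filter.mpr ⟨Finset.mem_univ _, h⟩)
          exact sub_pos.mpr (lt_of_le_of_ne (hfi_le i) hne)
      set ε := Finset.univ.inf' Hne εf with hε
      have hεpos : 0 < ε := (Finset.lt_inf'_iff Hne).mpr fun i _ => hεfpos i
      have hεle : ∀ i, ε ≤ εf i := fun i => Finset.inf'_le _ (Finset.mem_univ i)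
      have hlt : ∀ i, f i (k₀ - ε • d) < g := by
        intro i
        by_cases hi : i ∈ A
        · have hfi : f i k₀ = g := (Finset.mem_filter.mp hi).2
          have hre : k₀ - ε • d - u i = (k₀ - u i) - ε • d := sub_right_comm _ _ _
          have hkey : ‖k₀ - ε • d - u i‖ ^ 2 < ‖k₀ - u i‖ ^ 2 := by
            rw [hre, norm_sub_sq_real, real_inner_smul_right, norm_smul, Real.norm_eq_abs,
              abs_of_pos hεpos]
            have h1 : ε * (‖d‖ ^ 2 + 1) ≤ ⟪d, k₀ - u i⟫ := by
              have h2 := hεle i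
              rw [hεf] at h2
              simp only [hi, if_true] at h2
              exact (le_div_iff₀ (by positivity)).mp h2
            have hsym : ⟪k₀ - u i, d⟫ = ⟪d, k₀ - u i⟫ := real_inner_comm _ _
            nlinarith [hdk i hi, hεpos]
          have hlt2 : ‖k₀ - ε • d - u i‖ < ‖k₀ - u i‖ :=
            lt_of_pow_lt_pow_left₀ 2 (norm_nonneg _) hkey
          simp only [hf] at hfi ⊢
          linarith
        · have hne : f i k₀ ≠ g := fun h => hi (Finset.mem_filter.mpr ⟨Finset.mem_univ _, h⟩)
          have hfi_lt : f i k₀ < g := lt_of_le_of_ne (hfi_le i) hne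
          have h2 : ε * (2 * ‖d‖ + 1) ≤ g - f i k₀ := by
            have h3 := hεle i
            rw [hεf] at h3
            simp only [hi, if_false] at h3
            exact (le_div_iff₀ (by positivity)).mp h3
          have hre : k₀ - ε • d - u i = (k₀ - u i) - ε • d := sub_right_comm _ _ _
          have hnorm2 : ‖k₀ - ε • d - u i‖ ≤ ‖k₀ - u i‖ + ε * ‖d‖ := by
            rw [hre]
            refine (norm_sub_le _ _).trans ?_
            rw [norm_smul, Real.norm_eq_abs, abs_of_pos hεpos]
          simp only [hf] at hfi_lt h2 ⊢
          nlinarith [hεpos, norm_nonneg d]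
      have hGlt : G (k₀ - ε • d) < g := (Finset.sup'_lt_iff Hne).mpr fun i _ => hlt i
      exact absurd (hglobal (k₀ - ε • d)) (not_le.mpr hGlt)
    rw [mem_convexHull_iff_exists_fintype] at h0mem
    obtain ⟨ι, hι, wt, z, hwt0, hwt1, hzS, hsum0⟩ := h0mem
    have hchoice : ∀ j, ∃ i, i ∈ A ∧ n i = z j := by
      intro j
      obtain ⟨i, hiA, hni⟩ := hzS j
      exact ⟨i, hiA, hni⟩
    choose φ hφA hφn using hchoice
    set lam : Fin N → ℝ := fun i => ∑ j ∈ Finset.univ.filter (fun j => φ j = i), wt j with hlam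
    set w : Fin N → E3 := fun i => if i ∈ A then -(n i) else 0 with hw
    have hlam0 : ∀ i, 0 ≤ lam i := fun i => Finset.sum_nonneg fun j _ => hwt0 j
    have hlam_supp : ∀ i, lam i ≠ 0 → i ∈ A := by
      intro i hl
      by_contra hiA
      apply hl
      have hemp : Finset.filter (fun j => φ j = i) Finset.univ = ∅ :=
        Finset.filter_eq_empty_iff.mpr (fun j _ h => hiA (h ▸ hφA j))
      simp only [hlam, hemp, Finset.sum_empty]
    have hlam1 : ∑ i, lam i = 1 := by
      rw [hlam, Finset.sum_fiberwise Finset.univ φ wt]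
      exact hwt1
    have hw_le : ∀ i, ‖w i‖ ≤ 1 := by
      intro i
      by_cases hi : i ∈ A
      · simp [hw, hi, hnorm_n i hi]
      · simp [hw, hi]
    have hsumw : ∑ i, lam i • w i = 0 := by
      have step1 : ∑ i, lam i • w i = ∑ i, ∑ j ∈ Finset.univ.filter (fun j => φ j = i), wt j • w i := by
        refine Finset.sum_congr rfl fun i _ => ?_
        rw [hlam, Finset.sum_smul]
      have step2 : ∀ i, ∑ j ∈ Finset.univ.filter (fun j => φ j = i), wt j • w i
          = ∑ j ∈ Finset.univ.filter (fun j => φ j = i), wt j • w (φ j) := by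
        intro i
        refine Finset.sum_congr rfl fun j hj => ?_
        rw [(Finset.mem_filter.mp hj).2]
      rw [step1, Finset.sum_congr rfl (fun i _ => step2 i),
        Finset.sum_fiberwise Finset.univ φ (fun j => wt j • w (φ j))]
      have : ∀ j, wt j • w (φ j) = -(wt j • z j) := by
        intro j
        rw [hw]
        simp only [hφA j, if_true, hφn j, smul_neg]
      rw [Finset.sum_congr rfl (fun j _ => this j), Finset.sum_neg_distrib, hsum0, neg_zero]
    have hval : ∑ i, lam i * (q i + 2 * ⟪u i, w i⟫) = g := by
      have hkey : ∀ i, lam i * (q i + 2 * ⟪u i, w i⟫) = lam i * g + 2 * (lam i * ⟪k₀, w i⟫) := by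
        intro i
        by_cases hl : lam i = 0
        · simp [hl]
        · have hiA := hlam_supp i hl
          have hfi : q i + 2 * ‖k₀ - u i‖ = g := (Finset.mem_filter.mp hiA).2
          have hwi : w i = -(n i) := by simp [hw, hiA]
          have hiner : ⟪k₀ - u i, n i⟫ = ‖k₀ - u i‖ := by
            rw [hn, real_inner_smul_right, real_inner_self_eq_norm_sq,
              inv_mul_eq_div, sq, mul_div_assoc, div_self (hnorm_pos i hiA).ne', mul_one]
          have hsub : ⟪k₀, n i⟫ - ⟪u i, n i⟫ = ‖k₀ - u i‖ := by
            rw [← inner_sub_left]; exact hiner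
          have hinner : ⟪u i, w i⟫ = ‖k₀ - u i‖ + ⟪k₀, w i⟫ := by
            rw [hwi, inner_neg_right, inner_neg_right]
            linarith
          rw [hinner]
          linear_combination lam i * hfi
      rw [Finset.sum_congr rfl (fun i _ => hkey i), Finset.sum_add_distrib, ← Finset.sum_mul,
        hlam1, one_mul, ← Finset.mul_sum]
      have h2 : ∑ i, lam i * ⟪k₀, w i⟫ = ⟪k₀, ∑ i, lam i • w i⟫ := by
        rw [inner_sum]
        refine Finset.sum_congr rfl fun i _ => ?_
        rw [real_inner_smul_right]
      rw [h2, hsumw, inner_zero_right, mul_zero, add_zero]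
    exact ⟨g, k₀, lam, w, hfi_le, hlam0, hlam1, hsumw, hw_le, hval⟩

lemma re_real_smul (r : ℝ) (z : ℂ) : (r • z).re = r * z.re := by
  simp [Complex.real_smul]

/-- Weak duality. -/
lemma weak_duality {N : ℕ} (q : Fin N → ℝ) (ρ : Fin N → Matrix (Fin 2) (Fin 2) ℂ)
    (K : Matrix (Fin 2) (Fin 2) ℂ) (hfeas : ∀ i, (K - q i • ρ i).PosSemidef)
    (M : Fin N → Matrix (Fin 2) (Fin 2) ℂ) (hM : IsPOVM M) :
    ∑ i, q i * ((ρ i * M i).trace).re ≤ K.trace.re := by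
  have hterm : ∀ i, q i * ((ρ i * M i).trace).re
      = ((K * M i).trace).re - (((K - q i • ρ i) * M i).trace).re := by
    intro i
    rw [Matrix.sub_mul, Matrix.trace_sub, Complex.sub_re]
    have : ((q i • ρ i) * M i).trace = q i • ((ρ i * M i)).trace := by
      rw [Matrix.smul_mul, Matrix.trace_smul]
    rw [this, re_real_smul]
    ring
  calc ∑ i, q i * ((ρ i * M i).trace).re
      = ∑ i, (((K * M i).trace).re - (((K - q i • ρ i) * M i).trace).re) :=
        Finset.sum_congr rfl fun i _ => hterm i
    _ ≤ ∑ i, ((K * M i).trace).re := by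
        refine Finset.sum_le_sum fun i _ => ?_
        have := trace_mul_re_nonneg (hfeas i) (hM.1 i)
        linarith
    _ = K.trace.re := by
        rw [← Complex.re_sum, ← Matrix.trace_sum, ← Finset.mul_sum, hM.2, mul_one]

lemma blochMat_zero : blochMat 0 0 = 0 := by
  rw [blochMat_eq]
  ext i j
  fin_cases i <;> fin_cases j <;> simp

lemma blochMat_sum {κ : Type*} (s : Finset κ) (a : κ → ℝ) (m : κ → E3) :
    ∑ i ∈ s, blochMat (a i) (m i) = blochMat (∑ i ∈ s, a i) (∑ i ∈ s, m i) := by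
  induction s using Finset.cons_induction with
  | empty => simp [blochMat_zero]
  | cons i s hi ih => rw [Finset.sum_cons, Finset.sum_cons, Finset.sum_cons, ih, blochMat_add]

open scoped RealInnerProductSpace in
lemma inner_E3 (m n : E3) : ⟪m, n⟫ = m 0 * n 0 + m 1 * n 1 + m 2 * n 2 := by
  simp [PiLp.inner_apply, Fin.sum_univ_three]
  ring


open scoped RealInnerProductSpace

/-- Strong duality (Eq. (4)): the guessing probability equals the
infimum of `Re (tr K)` over Hermitian `K` with `K - q i • ρ i` positive semidefinite
for all `i`, and this infimum is attained (i.e. `pGuess q ρ` is the least element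
of the set of dual-feasible values). -/
theorem strong_duality {N : ℕ} (q : Fin N → ℝ) (ρ : Fin N → Matrix (Fin 2) (Fin 2) ℂ)
    (hq : ∀ i, 0 < q i) (hqsum : ∑ i, q i = 1)
    (hρ : ∀ i, IsQubitState (ρ i)) :
    IsLeast {x : ℝ | ∃ K : Matrix (Fin 2) (Fin 2) ℂ, K.IsHermitian ∧
      (∀ i, (K - q i • ρ i).PosSemidef) ∧ x = K.trace.re} (pGuess q ρ) := by
  classical
  have hN : 0 < N := by
    rcases Nat.eq_zero_or_pos N with h | h
    · subst h; simp at hqsum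
    · exact h
  have hdec : ∀ i, ∃ c : E3, ‖c‖ ≤ 1 / 2 ∧ ρ i = blochMat (1 / 2) c :=
    fun i => qubit_bloch (hρ i).1 (hρ i).2
  choose c hc1 hc2 using hdec
  set u : Fin N → E3 := fun i => q i • c i with hu
  obtain ⟨g, k, lam, w, hfeas3, hlam0, hlam1, hsumw, hw1, hval⟩ := kkt hN q hq u
  set K : Matrix (Fin 2) (Fin 2) ℂ := blochMat (g / 2) k with hK
  have hqρ : ∀ i, q i • ρ i = blochMat (q i / 2) (u i) := by
    intro i
    rw [hc2 i, blochMat_real_smul]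
    congr 1
    ring
  have hKfeas : ∀ i, (K - q i • ρ i).PosSemidef := by
    intro i
    rw [hqρ i, hK, blochMat_sub]
    refine blochMat_posSemidef_of ?_
    have h1 := hfeas3 i
    have h2 : (0:ℝ) ≤ ‖k - u i‖ := norm_nonneg _
    linarith
  have hKtr : K.trace.re = g := by
    rw [hK, blochMat_trace]
    rw [Complex.ofReal_re]
    ring
  set M : Fin N → Matrix (Fin 2) (Fin 2) ℂ := fun i => blochMat (lam i) (lam i • w i) with hM
  have hMpsd : ∀ i, (M i).PosSemidef := by
    intro i
    refine blochMat_posSemidef_of ?_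
    rw [norm_smul, Real.norm_eq_abs, abs_of_nonneg (hlam0 i)]
    calc lam i * ‖w i‖ ≤ lam i * 1 := mul_le_mul_of_nonneg_left (hw1 i) (hlam0 i)
      _ = lam i := mul_one _
  have hMsum : ∑ i, M i = 1 := by
    simp only [hM]
    rw [blochMat_sum, hlam1, hsumw, blochMat_one]
  have hMPOVM : IsPOVM M := ⟨hMpsd, hMsum⟩
  have hMval : ∑ i, q i * ((ρ i * M i).trace).re = g := by
    rw [← hval]
    refine Finset.sum_congr rfl fun i _ => ?_
    rw [hc2 i]
    simp only [hM]
    rw [blochMat_trace_mul_re, inner_E3]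
    simp only [hu, PiLp.smul_apply, smul_eq_mul]
    ring
  set P := {x : ℝ | ∃ M : Fin N → Matrix (Fin 2) (Fin 2) ℂ,
    IsPOVM M ∧ x = ∑ i, q i * ((ρ i * M i).trace).re} with hP
  have hgP : g ∈ P := ⟨M, hMPOVM, hMval.symm⟩
  have hub : ∀ x ∈ P, x ≤ g := by
    rintro x ⟨M', hM', rfl⟩
    exact (weak_duality q ρ K hKfeas M' hM').trans_eq hKtr
  have hg0 : 0 ≤ g := by
    have h1 := hfeas3 ⟨0, hN⟩
    have h2 := hq ⟨0, hN⟩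
    have h3 : (0:ℝ) ≤ ‖k - u ⟨0, hN⟩‖ := norm_nonneg _
    linarith
  have hpg : pGuess q ρ = g :=
    le_antisymm (Real.sSup_le hub hg0) (le_csSup ⟨g, hub⟩ hgP)
  constructor
  · exact ⟨K, blochMat_isHermitian _ _, hKfeas, by rw [hpg, hKtr]⟩
  · rintro x ⟨K', hK'h, hK'feas, rfl⟩
    have hub' : ∀ y ∈ P, y ≤ K'.trace.re := by
      rintro y ⟨M', hM', rfl⟩
      exact weak_duality q ρ K' hK'feas M' hM'
    have hK'0 : 0 ≤ K'.trace.re := by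
      have h1 := hK'feas ⟨0, hN⟩
      have h2 : ((q ⟨0, hN⟩ : ℝ) • ρ ⟨0, hN⟩).PosSemidef :=
        posSemidef_real_smul (hρ _).1 (hq _).le
      have h3 := h1.add h2
      rw [sub_add_cancel] at h3
      exact trace_re_nonneg_of_psd h3
    exact Real.sSup_le hub' hK'0


end
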